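/- Let A = (α e₁ + β e₂) e₁* and B = (γ e₁ + δ e₂) e₂* be rank-one matrices in M₂(ℂ). Then every matrix X ∈ M₂(ℂ) satisfying both A ⊥ X and B ⊥ X (Birkhoff–James) has rank at most one if and only if the vectors (α, β) and (γ, δ) are nonzero scalar multiples of each other. -/

import Mathlib

open Matrix
noncomputable def opNorm {n : ℕ} (A : Matrix (Fin n) (Fin n) ℂ) : ℝ :=
  ‖Matrix.toEuclideanCLM (𝕜 := ℂ) (n := Fin n) A‖
def BJ {n : ℕ} (A B : Matrix (Fin n) (Fin n) ℂ) : Prop :=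
  ∀ c : ℂ, opNorm A ≤ opNorm (A + c • B)

namespace S8
noncomputable def ev (x : Fin 2 → ℂ) : EuclideanSpace ℂ (Fin 2) :=
  (WithLp.equiv 2 (Fin 2 → ℂ)).symm x

lemma clm_apply (M : Matrix (Fin 2) (Fin 2) ℂ) (x : Fin 2 → ℂ) :
    Matrix.toEuclideanCLM (𝕜 := ℂ) M (ev x) = ev (M *ᵥ x) :=
  Matrix.toEuclideanCLM_toLp M x

lemma ev_apply (x : Fin 2 → ℂ) (i : Fin 2) : ev x i = x i := rfl

lemma norm_ev_sq (x : Fin 2 → ℂ) : ‖ev x‖ ^ 2 = ‖x 0‖ ^ 2 + ‖x 1‖ ^ 2 := by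
  rw [show ev x = (WithLp.equiv 2 (Fin 2 → ℂ)).symm x from rfl]
  rw [EuclideanSpace.norm_eq, Real.sq_sqrt (by positivity)]
  simp [Fin.sum_univ_two]

lemma inner_ev (x y : Fin 2 → ℂ) :
    (inner ℂ (ev x) (ev y) : ℂ) = star (x 0) * y 0 + star (x 1) * y 1 := by
  simp [ev, PiLp.inner_apply, Fin.sum_univ_two, RCLike.inner_apply]
  ring

lemma ev_smul (c : ℂ) (x : Fin 2 → ℂ) : ev (c • x) = c • ev x := rfl
lemma ev_add (x y : Fin 2 → ℂ) : ev (x + y) = ev x + ev y := rfl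

lemma vecMulVec_mulVec (u v x : Fin 2 → ℂ) :
    (vecMulVec u (star v)) *ᵥ x = (star v ⬝ᵥ x) • u := by
  ext i
  simp [vecMulVec, mulVec, dotProduct, Fin.sum_univ_two]
  ring

lemma dot_eq_inner (v x : Fin 2 → ℂ) : star v ⬝ᵥ x = (inner ℂ (ev v) (ev x) : ℂ) := by
  simp [inner_ev, dotProduct, Fin.sum_univ_two, ev_apply]

lemma opNorm_le_bound {M : Matrix (Fin 2) (Fin 2) ℂ} {C : ℝ} (hC : 0 ≤ C)
    (h : ∀ x : Fin 2 → ℂ, ‖ev (M *ᵥ x)‖ ≤ C * ‖ev x‖) : opNorm M ≤ C := by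
  refine ContinuousLinearMap.opNorm_le_bound _ hC fun x => ?_
  have := h (WithLp.equiv 2 (Fin 2 → ℂ) x)
  rwa [show ev (WithLp.equiv 2 (Fin 2 → ℂ) x) = x from rfl] at this

lemma le_opNorm (M : Matrix (Fin 2) (Fin 2) ℂ) (x : Fin 2 → ℂ) :
    ‖ev (M *ᵥ x)‖ ≤ opNorm M * ‖ev x‖ := by
  have := (Matrix.toEuclideanCLM (𝕜 := ℂ) M).le_opNorm (ev x)
  rwa [clm_apply] at this

lemma opNorm_rankOne (u v : Fin 2 → ℂ) (hv : ‖ev v‖ = 1) :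
    opNorm (vecMulVec u (star v)) = ‖ev u‖ := by
  apply le_antisymm
  · apply opNorm_le_bound (norm_nonneg _)
    intro x
    rw [vecMulVec_mulVec, dot_eq_inner, ev_smul, norm_smul]
    calc ‖(inner ℂ (ev v) (ev x) : ℂ)‖ * ‖ev u‖
        ≤ ‖ev v‖ * ‖ev x‖ * ‖ev u‖ := by
          gcongr; exact norm_inner_le_norm _ _
      _ = ‖ev u‖ * ‖ev x‖ := by rw [hv]; ring
  · have := le_opNorm (vecMulVec u (star v)) v
    rw [vecMulVec_mulVec, dot_eq_inner, ev_smul, norm_smul, hv, mul_one] at this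
    have h2 : (inner ℂ (ev v) (ev v) : ℂ) = 1 := by
      rw [inner_self_eq_norm_sq_to_K, hv]; norm_num
    simpa [h2, hv] using this

lemma opNorm_nonneg (M : Matrix (Fin 2) (Fin 2) ℂ) : 0 ≤ opNorm M := norm_nonneg _

/-- easy direction: trace condition implies BJ orthogonality -/
lemma bj_of_inner_eq_zero (u v : Fin 2 → ℂ) (hv : ‖ev v‖ = 1)
    (X : Matrix (Fin 2) (Fin 2) ℂ)
    (h : (inner ℂ (ev u) (ev (X *ᵥ v)) : ℂ) = 0) : BJ (vecMulVec u (star v)) X := by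
  intro c
  rw [opNorm_rankOne u v hv]
  have hRv : (vecMulVec u (star v)) *ᵥ v = u := by
    rw [vecMulVec_mulVec, dot_eq_inner, inner_self_eq_norm_sq_to_K, hv]
    norm_num
  have hmv : (vecMulVec u (star v) + c • X) *ᵥ v = u + c • (X *ᵥ v) := by
    rw [Matrix.add_mulVec, hRv, Matrix.smul_mulVec]
  have key : (inner ℂ (ev u) (ev ((vecMulVec u (star v) + c • X) *ᵥ v)) : ℂ) = (‖ev u‖ : ℂ) ^ 2 := by
    rw [hmv, ev_add, ev_smul, inner_add_right, inner_smul_right, h,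
      inner_self_eq_norm_sq_to_K]
    rw [mul_zero, add_zero]
    rfl
  have h1 : ‖ev u‖ ^ 2 ≤ ‖ev u‖ * (opNorm (vecMulVec u (star v) + c • X) * ‖ev v‖) := by
    calc ‖ev u‖ ^ 2 = ‖(inner ℂ (ev u) (ev ((vecMulVec u (star v) + c • X) *ᵥ v)) : ℂ)‖ := by
          rw [key]; simp [norm_pow]
      _ ≤ ‖ev u‖ * ‖ev ((vecMulVec u (star v) + c • X) *ᵥ v)‖ := norm_inner_le_norm _ _
      _ ≤ ‖ev u‖ * (opNorm _ * ‖ev v‖) := by gcongr; exact le_opNorm _ _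
  rw [hv, mul_one] at h1
  rcases eq_or_lt_of_le (norm_nonneg (ev u)) with h0 | h0
  · rw [← h0]; exact opNorm_nonneg _
  · nlinarith

/-- Frobenius-type bound via two columns in the directions v, w -/
lemma opNorm_sq_le_cols (M : Matrix (Fin 2) (Fin 2) ℂ) (v w : Fin 2 → ℂ)
    (hexp : ∀ x : Fin 2 → ℂ, M *ᵥ x = x 0 • (M *ᵥ v) + x 1 • (M *ᵥ w))
    : opNorm M ^ 2 ≤ ‖ev (M *ᵥ v)‖ ^ 2 + ‖ev (M *ᵥ w)‖ ^ 2 := by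
  set a := ‖ev (M *ᵥ v)‖
  set b := ‖ev (M *ᵥ w)‖
  have ha : 0 ≤ a := norm_nonneg _
  have hb : 0 ≤ b := norm_nonneg _
  have hbound : opNorm M ≤ Real.sqrt (a ^ 2 + b ^ 2) := by
    apply opNorm_le_bound (Real.sqrt_nonneg _)
    intro x
    have h1 : ‖ev (M *ᵥ x)‖ ≤ ‖x 0‖ * a + ‖x 1‖ * b := by
      rw [hexp x, ev_add, ev_smul, ev_smul]
      calc ‖x 0 • ev (M *ᵥ v) + x 1 • ev (M *ᵥ w)‖
          ≤ ‖x 0 • ev (M *ᵥ v)‖ + ‖x 1 • ev (M *ᵥ w)‖ := norm_add_le _ _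
        _ = ‖x 0‖ * a + ‖x 1‖ * b := by rw [norm_smul, norm_smul]
    refine h1.trans ?_
    have hx : ‖ev x‖ ^ 2 = ‖x 0‖ ^ 2 + ‖x 1‖ ^ 2 := norm_ev_sq x
    have hxn : 0 ≤ ‖ev x‖ := norm_nonneg _
    have key : (‖x 0‖ * a + ‖x 1‖ * b) ^ 2 ≤ (a ^ 2 + b ^ 2) * ‖ev x‖ ^ 2 := by
      rw [hx]
      nlinarith [sq_nonneg (‖x 0‖ * b - ‖x 1‖ * a), norm_nonneg (x 0), norm_nonneg (x 1)]
    have h2 : 0 ≤ ‖x 0‖ * a + ‖x 1‖ * b := by positivity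
    calc ‖x 0‖ * a + ‖x 1‖ * b = Real.sqrt ((‖x 0‖ * a + ‖x 1‖ * b) ^ 2) := by
          rw [Real.sqrt_sq h2]
      _ ≤ Real.sqrt ((a ^ 2 + b ^ 2) * ‖ev x‖ ^ 2) := Real.sqrt_le_sqrt key
      _ = Real.sqrt (a ^ 2 + b ^ 2) * ‖ev x‖ := by
          rw [Real.sqrt_mul (by positivity), Real.sqrt_sq hxn]
  calc opNorm M ^ 2 ≤ Real.sqrt (a ^ 2 + b ^ 2) ^ 2 := by
        have := opNorm_nonneg M; nlinarith
    _ = a ^ 2 + b ^ 2 := Real.sq_sqrt (by positivity)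

lemma inner_eq_zero_of_bj (u v w : Fin 2 → ℂ) (hv : ‖ev v‖ = 1)
    (hvw : (inner ℂ (ev v) (ev w) : ℂ) = 0)
    (X : Matrix (Fin 2) (Fin 2) ℂ)
    (hfrob : ∀ M : Matrix (Fin 2) (Fin 2) ℂ,
      opNorm M ^ 2 ≤ ‖ev (M *ᵥ v)‖ ^ 2 + ‖ev (M *ᵥ w)‖ ^ 2)
    (hBJ : BJ (vecMulVec u (star v)) X) :
    (inner ℂ (ev u) (ev (X *ᵥ v)) : ℂ) = 0 := by
  by_contra ht
  set t : ℂ := inner ℂ (ev u) (ev (X *ᵥ v)) with htdef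
  set a := ‖ev (X *ᵥ v)‖ with hadef
  set b := ‖ev (X *ᵥ w)‖ with hbdef
  have hnt : 0 < ‖t‖ := norm_pos_iff.mpr ht
  have hta : ‖t‖ ≤ ‖ev u‖ * a := norm_inner_le_norm _ _
  have hb0 : 0 ≤ b := norm_nonneg _
  have ha0 : 0 ≤ a := norm_nonneg _
  have h' : 0 < ‖ev u‖ * a := lt_of_lt_of_le hnt hta
  have ha : 0 < a := by
    rcases ha0.lt_or_eq with h | h
    · exact h
    · exfalso; rw [← h, mul_zero] at h'; exact lt_irrefl 0 h'
  have hab2 : 0 < a ^ 2 + b ^ 2 := by nlinarith [pow_pos ha 2, sq_nonneg b]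
  have htne : ‖t‖ ≠ 0 := hnt.ne'
  set s : ℝ := ‖t‖ ^ 2 / (a ^ 2 + b ^ 2) with hs
  have hspos : 0 < s := by positivity
  set c : ℂ := -((s / ‖t‖ ^ 2 : ℝ) : ℂ) * (starRingEnd ℂ t) with hc
  have h2c : ((‖t‖ : ℂ)) ^ 2 ≠ 0 := by
    have : (‖t‖ : ℝ) ^ 2 ≠ 0 := pow_ne_zero 2 htne
    exact_mod_cast this
  have hct : c * t = -(s : ℂ) := by
    rw [hc, mul_assoc, RCLike.conj_mul, neg_mul, neg_inj,
      show ((s / ‖t‖ ^ 2 : ℝ) : ℂ) = (s : ℂ) / ((‖t‖ : ℂ)) ^ 2 by push_cast; ring]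
    field_simp
    rw [mul_div_assoc]; simp [ht]
  have hcn : ‖c‖ = s / ‖t‖ := by
    rw [hc, norm_mul, norm_neg, RCLike.norm_conj, Complex.norm_real, Real.norm_eq_abs,
      abs_of_nonneg (by positivity : (0:ℝ) ≤ s / ‖t‖ ^ 2)]
    have gen : ∀ r : ℝ, r ≠ 0 → s / r ^ 2 * r = s / r := by
      intro r hr; field_simp
    exact gen ‖t‖ htne
  -- R *ᵥ v = u, R *ᵥ w = 0
  have hRv : (vecMulVec u (star v)) *ᵥ v = u := by
    rw [vecMulVec_mulVec, dot_eq_inner, inner_self_eq_norm_sq_to_K, hv]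
    norm_num
  have hRw : (vecMulVec u (star v)) *ᵥ w = 0 := by
    rw [vecMulVec_mulVec, dot_eq_inner, hvw, zero_smul]
  set M := vecMulVec u (star v) + c • X with hM
  have hMv : M *ᵥ v = u + c • (X *ᵥ v) := by
    rw [hM, Matrix.add_mulVec, hRv, Matrix.smul_mulVec]
  have hMw : M *ᵥ w = c • (X *ᵥ w) := by
    rw [hM, Matrix.add_mulVec, hRw, Matrix.smul_mulVec, zero_add]
  have hre : RCLike.re (inner ℂ (ev u) (c • ev (X *ᵥ v)) : ℂ) = -s := by
    rw [inner_smul_right, ← htdef, hct]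
    simp
  have norm1 : ‖ev (M *ᵥ v)‖ ^ 2 = ‖ev u‖ ^ 2 - 2 * s + (s / ‖t‖) ^ 2 * a ^ 2 := by
    rw [hMv, ev_add, ev_smul, norm_add_sq (𝕜 := ℂ), hre, norm_smul, hcn]
    ring
  have norm2 : ‖ev (M *ᵥ w)‖ ^ 2 = (s / ‖t‖) ^ 2 * b ^ 2 := by
    rw [hMw, ev_smul, norm_smul, hcn]
    ring
  have hkey : opNorm M ^ 2 ≤ ‖ev u‖ ^ 2 - s := by
    have h1 := hfrob M
    rw [norm1, norm2] at h1
    have hsab : s * (a ^ 2 + b ^ 2) = ‖t‖ ^ 2 := by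
      rw [hs]; field_simp
    have h2 : (s / ‖t‖) ^ 2 * a ^ 2 + (s / ‖t‖) ^ 2 * b ^ 2 = s := by
      have e : (s / ‖t‖) ^ 2 * a ^ 2 + (s / ‖t‖) ^ 2 * b ^ 2
          = s * (s * (a ^ 2 + b ^ 2)) / ‖t‖ ^ 2 := by ring
      rw [e, hsab, mul_div_assoc, div_self (pow_ne_zero 2 htne), mul_one]
    linarith
  have hle : ‖ev u‖ ≤ opNorm M := by
    have := hBJ c
    rwa [opNorm_rankOne u v hv] at this
  have hsq : ‖ev u‖ ^ 2 ≤ opNorm M ^ 2 := by nlinarith [norm_nonneg (ev u)]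
  linarith

lemma norm_e0 : ‖ev ![(1:ℂ), 0]‖ = 1 := by
  rw [show ev ![(1:ℂ),0] = (WithLp.equiv 2 (Fin 2 → ℂ)).symm ![(1:ℂ),0] from rfl]
  rw [EuclideanSpace.norm_eq]
  simp [Fin.sum_univ_two]

lemma norm_e1 : ‖ev ![(0:ℂ), 1]‖ = 1 := by
  rw [show ev ![(0:ℂ),1] = (WithLp.equiv 2 (Fin 2 → ℂ)).symm ![(0:ℂ),1] from rfl]
  rw [EuclideanSpace.norm_eq]
  simp [Fin.sum_univ_two]

lemma inner_e01 : (inner ℂ (ev ![(1:ℂ), 0]) (ev ![(0:ℂ), 1]) : ℂ) = 0 := by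
  rw [inner_ev]; simp

lemma inner_e10 : (inner ℂ (ev ![(0:ℂ), 1]) (ev ![(1:ℂ), 0]) : ℂ) = 0 := by
  rw [inner_ev]; simp

lemma hexp_std (M : Matrix (Fin 2) (Fin 2) ℂ) (x : Fin 2 → ℂ) :
    M *ᵥ x = x 0 • (M *ᵥ ![(1:ℂ), 0]) + x 1 • (M *ᵥ ![(0:ℂ), 1]) := by
  ext i
  fin_cases i <;> simp [mulVec, dotProduct, Fin.sum_univ_two] <;> ring

lemma hfrob01 (M : Matrix (Fin 2) (Fin 2) ℂ) :
    opNorm M ^ 2 ≤ ‖ev (M *ᵥ ![(1:ℂ), 0])‖ ^ 2 + ‖ev (M *ᵥ ![(0:ℂ), 1])‖ ^ 2 :=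
  opNorm_sq_le_cols M _ _ (hexp_std M)

lemma hfrob10 (M : Matrix (Fin 2) (Fin 2) ℂ) :
    opNorm M ^ 2 ≤ ‖ev (M *ᵥ ![(0:ℂ), 1])‖ ^ 2 + ‖ev (M *ᵥ ![(1:ℂ), 0])‖ ^ 2 := by
  have := hfrob01 M; linarith

lemma rank_le_one_of_det_eq_zero (X : Matrix (Fin 2) (Fin 2) ℂ) (h : X.det = 0) :
    X.rank ≤ 1 := by
  obtain ⟨v, hv, hXv⟩ := (Matrix.exists_mulVec_eq_zero_iff).mpr h
  have hker : v ∈ LinearMap.ker X.mulVecLin := by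
    rw [LinearMap.mem_ker, Matrix.mulVecLin_apply, hXv]
  have hkpos : 0 < Module.finrank ℂ (LinearMap.ker X.mulVecLin) := by
    rw [Module.finrank_pos_iff]
    exact nontrivial_of_ne ⟨v, hker⟩ 0 (by
      intro hcon
      apply hv
      simpa using congrArg Subtype.val hcon)
  have hsum := LinearMap.finrank_range_add_finrank_ker X.mulVecLin
  have hfr : Module.finrank ℂ (Fin 2 → ℂ) = 2 := Module.finrank_fin_fun ℂ
  rw [hfr] at hsum
  have : X.rank = Module.finrank ℂ (LinearMap.range X.mulVecLin) := rfl
  omega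

lemma rank_eq_two_of_det_ne_zero (X : Matrix (Fin 2) (Fin 2) ℂ) (h : X.det ≠ 0) :
    X.rank = 2 := by
  have hu : IsUnit X := (Matrix.isUnit_iff_isUnit_det X).mpr (isUnit_iff_ne_zero.mpr h)
  rw [Matrix.rank_of_isUnit X hu]
  simp

end S8

theorem stmt8 (α β γ δ : ℂ) (hab : ![α, β] ≠ 0) (hgd : ![γ, δ] ≠ 0)
    (A B : Matrix (Fin 2) (Fin 2) ℂ)
    (hA : A = Matrix.vecMulVec ![α, β] (star ![(1 : ℂ), 0]))
    (hB : B = Matrix.vecMulVec ![γ, δ] (star ![(0 : ℂ), 1])) :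
    (∀ X : Matrix (Fin 2) (Fin 2) ℂ, BJ A X → BJ B X → X.rank ≤ 1) ↔
      ∃ c : ℂ, c ≠ 0 ∧ ![α, β] = c • ![γ, δ] := by
  subst hA hB
  have hab' : α ≠ 0 ∨ β ≠ 0 := by
    by_contra h; push_neg at h
    exact hab (by funext i; fin_cases i <;> simp [h.1, h.2])
  have hgd' : γ ≠ 0 ∨ δ ≠ 0 := by
    by_contra h; push_neg at h
    exact hgd (by funext i; fin_cases i <;> simp [h.1, h.2])
  constructor
  · intro hall
    by_contra hnp
    have hD : α * δ - β * γ ≠ 0 := by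
      intro h0
      apply hnp
      by_cases hγ : γ = 0
      · have hδ : δ ≠ 0 := hgd'.resolve_left (not_not_intro hγ)
        have hα0 : α = 0 := by
          have hαδ : α * δ = 0 := by rw [hγ] at h0; linear_combination h0
          exact (mul_eq_zero.mp hαδ).resolve_right hδ
        have hβ0 : β ≠ 0 := hab'.resolve_left (not_not_intro hα0)
        refine ⟨β / δ, div_ne_zero hβ0 hδ, ?_⟩
        funext i; fin_cases i
        · simp [hα0, hγ]
        · simp; field_simp
      · refine ⟨α / γ, ?_, ?_⟩
        · have hα0 : α ≠ 0 := by
            intro hz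
            have hβγ : β * γ = 0 := by linear_combination δ * hz - h0
            exact (hab'.resolve_left (not_not_intro hz)) ((mul_eq_zero.mp hβγ).resolve_right hγ)
          exact div_ne_zero hα0 hγ
        · funext i; fin_cases i
          · simp; field_simp
          · simp; field_simp; linear_combination -h0
    set X : Matrix (Fin 2) (Fin 2) ℂ :=
      Matrix.of ![![-(star β), -(star δ)], ![star α, star γ]] with hXdef
    have hX0 : X *ᵥ ![(1:ℂ), 0] = ![-(star β), star α] := by
      funext i; fin_cases i <;> simp [hXdef, mulVec, dotProduct, Fin.sum_univ_two]
    have hX1 : X *ᵥ ![(0:ℂ), 1] = ![-(star δ), star γ] := by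
      funext i; fin_cases i <;> simp [hXdef, mulVec, dotProduct, Fin.sum_univ_two]
    have hBJA : BJ (vecMulVec ![α, β] (star ![(1:ℂ), 0])) X := by
      apply S8.bj_of_inner_eq_zero _ _ S8.norm_e0
      rw [hX0, S8.inner_ev]
      simp
      ring
    have hBJB : BJ (vecMulVec ![γ, δ] (star ![(0:ℂ), 1])) X := by
      apply S8.bj_of_inner_eq_zero _ _ S8.norm_e1
      rw [hX1, S8.inner_ev]
      simp
      ring
    have hdeteq : X.det = star (α * δ - β * γ) := by
      simp [hXdef, Matrix.det_fin_two_of, star_mul']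
      ring
    have hdet : X.det ≠ 0 := by
      rw [hdeteq]
      exact star_ne_zero.mpr hD
    have := hall X hBJA hBJB
    rw [S8.rank_eq_two_of_det_ne_zero X hdet] at this
    omega
  · rintro ⟨c, hc, hpar⟩ X hXA hXB
    have hα : α = c * γ := by have := congrFun hpar 0; simpa using this
    have hβ : β = c * δ := by have := congrFun hpar 1; simpa using this
    have h1 := S8.inner_eq_zero_of_bj ![α, β] ![(1:ℂ), 0] ![(0:ℂ), 1]
      S8.norm_e0 S8.inner_e01 X S8.hfrob01 hXA
    have h2 := S8.inner_eq_zero_of_bj ![γ, δ] ![(0:ℂ), 1] ![(1:ℂ), 0]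
      S8.norm_e1 S8.inner_e10 X S8.hfrob10 hXB
    rw [S8.inner_ev] at h1 h2
    simp [mulVec, dotProduct, Fin.sum_univ_two] at h1 h2
    have hcc : (starRingEnd ℂ) c ≠ 0 := star_ne_zero.mpr hc
    rw [hα, hβ] at h1
    simp only [star_mul', _root_.map_mul] at h1
    have e1 : (starRingEnd ℂ) γ * X 0 0 + (starRingEnd ℂ) δ * X 1 0 = 0 := by
      apply mul_left_cancel₀ hcc
      rw [mul_zero]
      linear_combination h1
    have keyγ : (starRingEnd ℂ) γ * (X 0 0 * X 1 1 - X 0 1 * X 1 0) = 0 := by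
      linear_combination X 1 1 * e1 - X 1 0 * h2
    have keyδ : (starRingEnd ℂ) δ * (X 0 0 * X 1 1 - X 0 1 * X 1 0) = 0 := by
      linear_combination X 0 0 * h2 - X 0 1 * e1
    apply S8.rank_le_one_of_det_eq_zero
    rw [Matrix.det_fin_two]
    rcases hgd' with hγ | hδ
    · exact (mul_eq_zero.mp keyγ).resolve_left (star_ne_zero.mpr hγ)
    · exact (mul_eq_zero.mp keyδ).resolve_left (star_ne_zero.mpr hδ)
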